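/- arXiv:2206.04260 — 2 statements merged into one kernel-verified Lean document; each statement's English description precedes it below -/
import Mathlib

section
/- Let S be a 4-cap-free, n-cup-free configuration with a slope labeling and define α(p) (resp. β(p)) as the maximum length of a cup ending at p with last edge labeled 1 (resp. ending at p with any last label), with value 1 if no such cup exists. Then for any two points p, q with β(p) = β(q), the edge between them has label 1, and p < q if and only if α(p) < α(q). Likewise, if α(p) = α(q), the edge between them has label 2, and p < q if and only if β(p) < β(q). -/
variable {α : Type*} [LinearOrder α]

/-- Every consecutive triple of the list satisfies `f`. -/
def Triples (f : α → α → α → Prop) : List α → Prop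
  | x :: y :: z :: l => f x y z ∧ Triples f (y :: z :: l)
  | _ => True

/-- `l` is a cup in the configuration `(S, cup)`: a nonempty increasing list of
vertices of `S` all of whose consecutive triples are colored cup. -/
def IsCupIn (S : Finset α) (cup : α → α → α → Prop) (l : List α) : Prop :=
  l ≠ [] ∧ l.Chain' (· < ·) ∧ (∀ x ∈ l, x ∈ S) ∧ Triples cup l

/-- `l` is a cap in the configuration `(S, cup)`. -/
def IsCapIn (S : Finset α) (cup : α → α → α → Prop) (l : List α) : Prop :=
  l ≠ [] ∧ l.Chain' (· < ·) ∧ (∀ x ∈ l, x ∈ S) ∧ Triples (fun x y z => ¬ cup x y z) l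

/-- The configuration has no cap with `a` (or more) vertices. -/
def CapFree (S : Finset α) (cup : α → α → α → Prop) (a : ℕ) : Prop :=
  ∀ l : List α, IsCapIn S cup l → l.length < a

/-- The configuration has no cup with `b` (or more) vertices. -/
def CupFree (S : Finset α) (cup : α → α → α → Prop) (b : ℕ) : Prop :=
  ∀ l : List α, IsCupIn S cup l → l.length < b

def StartsAt (l : List α) (p : α) : Prop := l.head? = some p

def EndsAt (l : List α) (p : α) : Prop := l.getLast? = some p

/-- A weak `(a, b)`-gon: an `a`-cap and a `b`-cup sharing both endpoints. -/
def HasWeakGon (S : Finset α) (cup : α → α → α → Prop) (a b : ℕ) : Prop :=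
  ∃ (A U : List α) (x y : α), IsCapIn S cup A ∧ A.length = a ∧
    IsCupIn S cup U ∧ U.length = b ∧
    StartsAt A x ∧ StartsAt U x ∧ EndsAt A y ∧ EndsAt U y

/-- Two cups from `p` to `r` and from `q` to `s` are interweaved if `p < q ≤ r < s`. -/
def Interweaved (C₁ C₂ : List α) : Prop :=
  ∃ p r q s, StartsAt C₁ p ∧ EndsAt C₁ r ∧ StartsAt C₂ q ∧ EndsAt C₂ s ∧
    p < q ∧ q ≤ r ∧ r < s

/-- A laced `(n-1)`-cup: an `(n-1)`-cup from `p` to `q` together with a cup ending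
at `p` and a cup starting at `q` whose sizes sum to `n - 1`. -/
def IsLacedCup (S : Finset α) (cup : α → α → α → Prop) (n : ℕ) (C : List α) : Prop :=
  IsCupIn S cup C ∧ C.length = n - 1 ∧
  ∃ p q Cp Cq, StartsAt C p ∧ EndsAt C q ∧ IsCupIn S cup Cp ∧ IsCupIn S cup Cq ∧
    EndsAt Cp p ∧ StartsAt Cq q ∧ Cp.length + Cq.length = n - 1

/-- A slope labeling of an `a`-cap-free configuration: labels in `{1, …, a-2}`
such that `s x y ≤ s y z` forces `x y z` to be a cup. -/
def IsSlopeLabeling (S : Finset α) (cup : α → α → α → Prop) (a : ℕ) (s : α → α → ℕ) : Prop :=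
  (∀ x ∈ S, ∀ y ∈ S, x < y → 1 ≤ s x y ∧ s x y ≤ a - 2) ∧
  (∀ x ∈ S, ∀ y ∈ S, ∀ z ∈ S, x < y → y < z → s x y ≤ s y z → cup x y z)

/-- `α_i(p)`: maximum length of a cup ending at `p` with last edge of label `≤ i`
(`1` if there is no such cup). -/
noncomputable def alphaStat (S : Finset α) (cup : α → α → α → Prop) (s : α → α → ℕ)
    (i : ℕ) (p : α) : ℕ :=
  max 1 (sSup {k | ∃ (l : List α) (x : α), IsCupIn S cup l ∧ EndsAt l p ∧
    l.length = k ∧ l.dropLast.getLast? = some x ∧ s x p ≤ i})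

/-- `β(p)`: maximum length of a cup ending at `p` (`1` if there is none). -/
noncomputable def betaStat (S : Finset α) (cup : α → α → α → Prop) (p : α) : ℕ :=
  max 1 (sSup {k | ∃ l : List α, IsCupIn S cup l ∧ EndsAt l p ∧ l.length = k})

/-- The cup coloring of the mirror reflection. -/
def opCup (cup : α → α → α → Prop) : αᵒᵈ → αᵒᵈ → αᵒᵈ → Prop :=
  fun x y z => cup (OrderDual.ofDual z) (OrderDual.ofDual y) (OrderDual.ofDual x)

/-- The vertex set of the mirror reflection. -/
def opSet (S : Finset α) : Finset αᵒᵈ := S.map OrderDual.toDual.toEmbedding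

/-- The mirror reflection of a cap/cup. -/
def opList (l : List α) : List αᵒᵈ := (l.map OrderDual.toDual).reverse

set_option linter.unusedSectionVars false

section Aux

variable {cup : α → α → α → Prop} {S : Finset α} {s : α → α → ℕ} {p q : α} {n : ℕ}

private lemma triples_concat {f : α → α → α → Prop} {q : α} :
    ∀ l : List α, Triples f l →
      (∀ x y, l.dropLast.getLast? = some x → l.getLast? = some y → f x y q) →
      Triples f (l ++ [q])
  | [], _, _ => trivial
  | [a], _, _ => trivial
  | [a, b], _, h => ⟨h a b rfl rfl, trivial⟩
  | a :: b :: c :: t, ⟨hf, ht⟩, h => by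
      refine ⟨hf, triples_concat (b :: c :: t) ht ?_⟩
      intro x y hx hy
      apply h x y
      · rcases t with _ | ⟨d, t⟩ <;> simpa using hx
      · simpa using hy

private lemma chain'_last {R : α → α → Prop} :
    ∀ l : List α, l.Chain' R → l.dropLast.getLast? = some p → l.getLast? = some q → R p q
  | [], _, hx, _ => by simp at hx
  | [a], _, hx, _ => by simp at hx
  | [a, b], hc, hx, hy => by
      simp at hx hy; subst hx; subst hy
      exact List.isChain_pair.mp hc
  | a :: b :: c :: t, hc, hx, hy => by
      refine chain'_last (b :: c :: t) hc.tail ?_ ?_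
      · rcases t with _ | ⟨d, t⟩ <;> simpa using hx
      · simpa using hy

/-- Extending a cup ending at `p` by one more point `q`. -/
private lemma cup_extend {l : List α} (hl : IsCupIn S cup l) (he : EndsAt l p)
    (hq : q ∈ S) (hpq : p < q)
    (hcup : ∀ x, l.dropLast.getLast? = some x → cup x p q) :
    IsCupIn S cup (l ++ [q]) ∧ EndsAt (l ++ [q]) q ∧ (l ++ [q]).dropLast.getLast? = some p := by
  obtain ⟨hne, hch, hmem, htr⟩ := hl
  refine ⟨⟨by simp, ?_, ?_, ?_⟩, ?_, ?_⟩
  · refine List.isChain_append.mpr ⟨hch, List.isChain_singleton q, ?_⟩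
    intro x hx y hy
    simp only [List.head?_cons, Option.mem_def, Option.some.injEq] at hy
    rw [he] at hx
    simp only [Option.mem_def, Option.some.injEq] at hx
    subst hx; subst hy; exact hpq
  · intro x hx
    rcases List.mem_append.mp hx with h | h
    · exact hmem x h
    · simp only [List.mem_singleton] at h; subst h; exact hq
  · refine triples_concat l htr ?_
    intro x y hx hy
    rw [he] at hy
    injection hy with hy; subst hy
    exact hcup x hx
  · exact List.getLast?_concat
  · rw [List.dropLast_concat]; exact he

private lemma beta_ge {l : List α} (hn : CupFree S cup n) (hl : IsCupIn S cup l)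
    (he : EndsAt l p) : l.length ≤ betaStat S cup p := by
  have hbdd : BddAbove {k | ∃ l : List α, IsCupIn S cup l ∧ EndsAt l p ∧ l.length = k} :=
    ⟨n, by rintro k ⟨m, hm, -, rfl⟩; exact (hn m hm).le⟩
  exact le_trans (le_csSup hbdd ⟨l, hl, he, rfl⟩) (le_max_right _ _)

private lemma alpha_ge {l : List α} {x : α} (hn : CupFree S cup n) (hl : IsCupIn S cup l)
    (he : EndsAt l p) (hx : l.dropLast.getLast? = some x) (hsx : s x p ≤ 1) :
    l.length ≤ alphaStat S cup s 1 p := by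
  have hbdd : BddAbove {k | ∃ (l : List α) (x : α), IsCupIn S cup l ∧ EndsAt l p ∧
      l.length = k ∧ l.dropLast.getLast? = some x ∧ s x p ≤ 1} :=
    ⟨n, by rintro k ⟨m, y, hm, -, rfl, -, -⟩; exact (hn m hm).le⟩
  exact le_trans (le_csSup hbdd ⟨l, x, hl, he, rfl, hx, hsx⟩) (le_max_right _ _)

/-- There is a cup realizing `betaStat`. -/
private lemma beta_attained (hn : CupFree S cup n) (hp : p ∈ S) :
    ∃ l, IsCupIn S cup l ∧ EndsAt l p ∧ l.length = betaStat S cup p := by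
  have h1 : (1 : ℕ) ∈ {k | ∃ l : List α, IsCupIn S cup l ∧ EndsAt l p ∧ l.length = k} :=
    ⟨[p], ⟨by simp, List.isChain_singleton p, by simpa using hp, trivial⟩, rfl, rfl⟩
  have hbdd : BddAbove {k | ∃ l : List α, IsCupIn S cup l ∧ EndsAt l p ∧ l.length = k} :=
    ⟨n, by rintro k ⟨m, hm, -, rfl⟩; exact (hn m hm).le⟩
  obtain ⟨l, hl, he, hlen⟩ := Nat.sSup_mem ⟨1, h1⟩ hbdd
  refine ⟨l, hl, he, ?_⟩
  rw [hlen, betaStat, max_eq_right (le_csSup hbdd h1)]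

/-- If the α-set is nonempty, `alphaStat` is realized; otherwise `alphaStat = 1`. -/
private lemma alpha_cases (hn : CupFree S cup n) (hp : p ∈ S) :
    alphaStat S cup s 1 p = 1 ∨ ∃ l x, IsCupIn S cup l ∧ EndsAt l p ∧
      l.length = alphaStat S cup s 1 p ∧ l.dropLast.getLast? = some x ∧ s x p ≤ 1 := by
  by_cases hAne : {k | ∃ (l : List α) (x : α), IsCupIn S cup l ∧ EndsAt l p ∧
      l.length = k ∧ l.dropLast.getLast? = some x ∧ s x p ≤ 1}.Nonempty
  · right
    have hbdd : BddAbove {k | ∃ (l : List α) (x : α), IsCupIn S cup l ∧ EndsAt l p ∧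
        l.length = k ∧ l.dropLast.getLast? = some x ∧ s x p ≤ 1} :=
      ⟨n, by rintro k ⟨m, y, hm, -, rfl, -, -⟩; exact (hn m hm).le⟩
    obtain ⟨l, x, hl, he, hlen, hx, hsx⟩ := Nat.sSup_mem hAne hbdd
    have h2 : 2 ≤ l.length := by
      rcases l with _ | ⟨a, _ | ⟨b, t⟩⟩
      · simp at hx
      · simp at hx
      · simp only [List.length_cons]; omega
    refine ⟨l, x, hl, he, ?_, hx, hsx⟩
    rw [alphaStat, ← hlen]
    omega
  · left
    rw [alphaStat, Set.not_nonempty_iff_eq_empty.mp hAne]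
    simp

private lemma beta_step (hn : CupFree S cup n) (hs : IsSlopeLabeling S cup 4 s)
    (hp : p ∈ S) (hq : q ∈ S) (hpq : p < q) (h2 : s p q = 2) :
    betaStat S cup p + 1 ≤ betaStat S cup q := by
  obtain ⟨l, hl, he, hlen⟩ := beta_attained hn hp
  have hx : ∀ x, l.dropLast.getLast? = some x → cup x p q := by
    intro x hx
    have hxl : x ∈ l := List.dropLast_subset l (List.mem_of_mem_getLast? hx)
    have hxS : x ∈ S := hl.2.2.1 x hxl
    have hxp : x < p := chain'_last l hl.2.1 hx he
    exact hs.2 x hxS p hp q hq hxp hpq (by rw [h2]; exact (hs.1 x hxS p hp hxp).2)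
  obtain ⟨hl', he', -⟩ := cup_extend hl he hq hpq hx
  have := beta_ge hn hl' he'
  simp only [List.length_append, List.length_singleton] at this
  omega

private lemma alpha_step (hn : CupFree S cup n) (hs : IsSlopeLabeling S cup 4 s)
    (hp : p ∈ S) (hq : q ∈ S) (hpq : p < q) (h1 : s p q = 1) :
    alphaStat S cup s 1 p + 1 ≤ alphaStat S cup s 1 q := by
  rcases alpha_cases (s := s) hn hp with h | ⟨l, x, hl, he, hlen, hx, hsx⟩
  · -- use the cup [p, q]
    have hl : IsCupIn S cup [p, q] :=
      ⟨by simp, List.isChain_pair.mpr hpq,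
       by intro y hy; simp only [List.mem_cons, List.mem_singleton] at hy
          rcases hy with rfl | rfl | hy; exacts [hp, hq, absurd hy List.not_mem_nil],
       trivial⟩
    have he2 : EndsAt [p, q] q := rfl
    have hd2 : ([p, q] : List α).dropLast.getLast? = some p := rfl
    have := alpha_ge hn hl he2 hd2 (le_of_eq h1)
    simp only [List.length_cons, List.length_nil] at this
    omega
  · have hcup : ∀ y, l.dropLast.getLast? = some y → cup y p q := by
      intro y hy
      rw [hx] at hy; injection hy with hy; subst hy
      have hxl : x ∈ l := List.dropLast_subset l (List.mem_of_mem_getLast? hx)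
      have hxS : x ∈ S := hl.2.2.1 x hxl
      have hxp : x < p := chain'_last l hl.2.1 hx he
      exact hs.2 x hxS p hp q hq hxp hpq (by omega)
    obtain ⟨hl', he', hd'⟩ := cup_extend hl he hq hpq hcup
    have := alpha_ge hn hl' he' hd' (le_of_eq h1)
    simp only [List.length_append, List.length_singleton] at this
    omega

end Aux
theorem stmt8 (n : ℕ) (S : Finset α) (cup : α → α → α → Prop) (s : α → α → ℕ)
    (h4 : CapFree S cup 4) (hn : CupFree S cup n)
    (hs : IsSlopeLabeling S cup 4 s) :
    (∀ p ∈ S, ∀ q ∈ S, p ≠ q → betaStat S cup p = betaStat S cup q →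
      s (min p q) (max p q) = 1 ∧
      (p < q ↔ alphaStat S cup s 1 p < alphaStat S cup s 1 q)) ∧
    (∀ p ∈ S, ∀ q ∈ S, p ≠ q → alphaStat S cup s 1 p = alphaStat S cup s 1 q →
      s (min p q) (max p q) = 2 ∧
      (p < q ↔ betaStat S cup p < betaStat S cup q)) := by
  have key : ∀ p ∈ S, ∀ q ∈ S, p < q →
      (betaStat S cup p = betaStat S cup q →
        s p q = 1 ∧ alphaStat S cup s 1 p < alphaStat S cup s 1 q) ∧
      (alphaStat S cup s 1 p = alphaStat S cup s 1 q →
        s p q = 2 ∧ betaStat S cup p < betaStat S cup q) := by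
    intro p hp q hq hpq
    have hbound := hs.1 p hp q hq hpq
    have h12 : s p q = 1 ∨ s p q = 2 := by omega
    constructor
    · intro hb
      have h1 : s p q = 1 := by
        rcases h12 with h | h
        · exact h
        · have := beta_step hn hs hp hq hpq h; omega
      exact ⟨h1, by have := alpha_step hn hs hp hq hpq h1; omega⟩
    · intro ha
      have h2 : s p q = 2 := by
        rcases h12 with h | h
        · have := alpha_step hn hs hp hq hpq h; omega
        · exact h
      exact ⟨h2, by have := beta_step hn hs hp hq hpq h2; omega⟩
  constructor
  · intro p hp q hq hne hb
    rcases hne.lt_or_gt with hlt | hlt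
    · obtain ⟨h1, h2⟩ := (key p hp q hq hlt).1 hb
      rw [min_eq_left hlt.le, max_eq_right hlt.le]
      exact ⟨h1, ⟨fun _ => h2, fun _ => hlt⟩⟩
    · obtain ⟨h1, h2⟩ := (key q hq p hp hlt).1 hb.symm
      rw [min_eq_right hlt.le, max_eq_left hlt.le]
      exact ⟨h1, ⟨fun h => absurd h hlt.asymm, fun h => absurd h h2.asymm⟩⟩
  · intro p hp q hq hne ha
    rcases hne.lt_or_gt with hlt | hlt
    · obtain ⟨h1, h2⟩ := (key p hp q hq hlt).2 ha
      rw [min_eq_left hlt.le, max_eq_right hlt.le]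
      exact ⟨h1, ⟨fun _ => h2, fun _ => hlt⟩⟩
    · obtain ⟨h1, h2⟩ := (key q hq p hp hlt).2 ha.symm
      rw [min_eq_right hlt.le, max_eq_left hlt.le]
      exact ⟨h1, ⟨fun h => absurd h hlt.asymm, fun h => absurd h h2.asymm⟩⟩
end

section
/- Let n ≥ 4 and let S be a 4-cap-free, n-cup-free configuration. Suppose S contains an (n-1)-cup from x to y, an (n-2)-cup ending at x, and an (n-2)-cup starting at y. Then S contains a pair of interweaved laced (n-1)-cups. -/
variable {α : Type*} [LinearOrder α]

section ES_Helpers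
set_option linter.unusedSectionVars false
set_option linter.unusedVariables false

variable {α : Type*} [LinearOrder α]

theorem triples_tail' {f : α → α → α → Prop} {p : α} {l : List α} (h : Triples f (p :: l)) :
    Triples f l := by
  match l with
  | [] => trivial
  | [_] => trivial
  | a :: b :: t => exact h.2

theorem triples_prefix (f : α → α → α → Prop) :
    ∀ (l r : List α), Triples f (l ++ r) → Triples f l
  | [], _, _ => trivial
  | [_], _, _ => trivial
  | [_, _], _, _ => trivial
  | a :: b :: c :: t, r, h => ⟨h.1, triples_prefix f (b :: c :: t) r h.2⟩

theorem triples_snoc (f : α → α → α → Prop) :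
    ∀ (l : List α) (u v z : α), Triples f (l ++ [u, v]) → f u v z →
      Triples f (l ++ [u, v, z])
  | [], _, _, _, _, hz => ⟨hz, trivial⟩
  | [_], _, _, _, h, hz => ⟨h.1, hz, trivial⟩
  | p :: q :: t, u, v, z, h, hz => by
    cases t with
    | nil => exact ⟨h.1, triples_snoc f [q] u v z h.2 hz⟩
    | cons r t' => exact ⟨h.1, triples_snoc f (q :: r :: t') u v z h.2 hz⟩

theorem triples_graft (f : α → α → α → Prop) :
    ∀ (l : List α) (u v w : α), Triples f (l ++ [u, v]) →
      (∀ l' p, l = l' ++ [p] → f p u w) → Triples f (l ++ [u, w])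
  | [], _, _, _, _, _ => trivial
  | [p], u, v, w, _, hj => ⟨hj [] p rfl, trivial⟩
  | p :: q :: t, u, v, w, h, hj => by
    cases t with
    | nil =>
      exact ⟨h.1, triples_graft f [q] u v w h.2
        (fun l' r hr => hj (p :: l') r (by rw [hr]; rfl))⟩
    | cons r t' =>
      exact ⟨h.1, triples_graft f (q :: r :: t') u v w h.2
        (fun l' s hs => hj (p :: l') s (by rw [hs]; rfl))⟩

theorem chain'_split_lt {u v : α} {l₁ l₂ : List α}
    (h : List.Chain' (· < ·) (l₁ ++ l₂)) (hu : u ∈ l₁) (hv : v ∈ l₂) : u < v :=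
  (List.pairwise_append.mp (List.isChain_iff_pairwise.mp h)).2.2 u hu v hv

theorem head?_append_cons (l : List α) (u : α) (r r' : List α) :
    (l ++ u :: r).head? = (l ++ u :: r').head? := by cases l <;> rfl

theorem mem_left_of_head?_append {l₁ l₂ : List α} {z : α}
    (h : (l₁ ++ l₂).head? = some z) (h₁ : l₁ ≠ []) : z ∈ l₁ := by
  cases l₁ with
  | nil => exact (h₁ rfl).elim
  | cons a t =>
    have ha : a = z := by simpa using h
    simp [← ha]

theorem mem_of_getLast?_eq {l : List α} {z : α} (h : l.getLast? = some z) : z ∈ l := by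
  obtain ⟨hne, hz⟩ := List.mem_getLast?_eq_getLast (Option.mem_def.mpr h)
  rw [hz]; exact List.getLast_mem hne

theorem exists_concat' {l : List α} (h : l ≠ []) : ∃ l' u, l = l' ++ [u] :=
  ⟨l.dropLast, l.getLast h, by rw [List.dropLast_append_getLast h]⟩

theorem exists_concat_two {l : List α} (h : 2 ≤ l.length) : ∃ l' u v, l = l' ++ [u, v] := by
  have h1 : l ≠ [] := by intro hl; rw [hl] at h; simp at h
  obtain ⟨l', v, rfl⟩ := exists_concat' h1
  have h2 : l' ≠ [] := by
    intro hl; rw [hl] at h; simp at h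
  obtain ⟨l'', u, rfl⟩ := exists_concat' h2
  exact ⟨l'', u, v, by simp⟩

theorem exists_cons_two {l : List α} (h : 2 ≤ l.length) : ∃ p q t, l = p :: q :: t := by
  match l with
  | p :: q :: t => exact ⟨p, q, t, rfl⟩
  | [] | [_] => simp at h

theorem exists_cons_three {l : List α} (h : 3 ≤ l.length) : ∃ p q r t, l = p :: q :: r :: t := by
  match l with
  | p :: q :: r :: t => exact ⟨p, q, r, t, rfl⟩
  | [] | [_] | [_, _] => simp at h

theorem isCupIn_single {S : Finset α} {cup : α → α → α → Prop} {z : α} (hz : z ∈ S) :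
    IsCupIn S cup [z] :=
  ⟨by simp, List.isChain_singleton _, by intro w hw; rw [List.mem_singleton] at hw; subst hw; exact hz, trivial⟩

end ES_Helpers

theorem stmt11 (n : ℕ) (hn : 4 ≤ n) (S : Finset α) (cup : α → α → α → Prop)
    (h4 : CapFree S cup 4) (hncf : CupFree S cup n)
    (x y : α) (C Cx Cy : List α)
    (hC : IsCupIn S cup C) (hClen : C.length = n - 1)
    (hCx : StartsAt C x) (hCy : EndsAt C y)
    (hx : IsCupIn S cup Cx) (hxlen : Cx.length = n - 2) (hxend : EndsAt Cx x)
    (hy : IsCupIn S cup Cy) (hylen : Cy.length = n - 2) (hystart : StartsAt Cy y) :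
    ∃ C₁ C₂ : List α, IsLacedCup S cup n C₁ ∧ IsLacedCup S cup n C₂ ∧
      Interweaved C₁ C₂ := by
  -- destructure C = x :: c2 :: c3 :: T
  obtain ⟨c2, c3, T, rfl⟩ : ∃ q r t, C = x :: q :: r :: t := by
    obtain ⟨p, q, r, t, heq⟩ := exists_cons_three (l := C) (by omega)
    have hpx : p = x := by
      have h := hCx; rw [heq] at h; exact Option.some.inj h
    exact ⟨q, r, t, by rw [heq, hpx]⟩
  -- destructure Cy = y :: b :: U
  obtain ⟨b, U, rfl⟩ : ∃ b u, Cy = y :: b :: u := by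
    obtain ⟨p, q, t, heq⟩ := exists_cons_two (l := Cy) (by omega)
    have hpy : p = y := by
      have h := hystart; rw [heq] at h; exact Option.some.inj h
    exact ⟨q, t, by rw [heq, hpy]⟩
  -- destructure Cx = A₀ ++ [a, x]
  obtain ⟨A₀, a, hx1⟩ : ∃ l' u, Cx = l' ++ [u, x] := by
    obtain ⟨l', u, v, heq⟩ := exists_concat_two (l := Cx) (by omega)
    have hvx : v = x := by
      have h : ((l' ++ [u]) ++ [v]).getLast? = some x := by
        rw [show (l' ++ [u]) ++ [v] = l' ++ [u, v] by simp, ← heq]; exact hxend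
      rw [List.getLast?_concat] at h
      exact Option.some.inj h
    exact ⟨l', u, by rw [heq, hvx]⟩
  obtain ⟨hCne, hCch, hCS, hCtr⟩ := id hC
  obtain ⟨hCxne, hCxch, hCxS, hCxtr⟩ := id hx
  obtain ⟨hCyne, hCych, hCyS, hCytr⟩ := id hy
  have hchx : List.Chain' (· < ·) (A₀ ++ [a, x]) := hx1 ▸ hCxch
  have hCxtr' : Triples cup (A₀ ++ [a, x]) := hx1 ▸ hCxtr
  -- back decomposition of C : x :: c2 :: c3 :: T = P ++ [e, d, y]
  obtain ⟨P, e, d, hc2eq⟩ : ∃ P e d, x :: c2 :: c3 :: T = P ++ [e, d, y] := by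
    obtain ⟨Q, d, y', hq⟩ := exists_concat_two (l := x :: c2 :: c3 :: T) (by simp)
    have hy' : y' = y := by
      have h : ((Q ++ [d]) ++ [y']).getLast? = some y := by
        rw [show (Q ++ [d]) ++ [y'] = Q ++ [d, y'] by simp, ← hq]; exact hCy
      rw [List.getLast?_concat] at h
      exact Option.some.inj h
    have hQne : Q ≠ [] := by
      intro h0
      rw [h0] at hq
      have := congrArg List.length hq
      simp at this
    obtain ⟨P, e, hp⟩ := exists_concat' hQne
    exact ⟨P, e, d, by rw [hq, hp, hy']; simp⟩
  have hCch2 : List.Chain' (· < ·) (P ++ [e, d, y]) := hc2eq ▸ hCch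
  have hCtr2 : Triples cup (P ++ [e, d, y]) := hc2eq ▸ hCtr
  -- head of Cx
  obtain ⟨a1, A₁, ha1⟩ : ∃ a1 A₁, A₀ ++ [a, x] = a1 :: A₁ := by
    cases A₀ with
    | nil => exact ⟨a, [x], rfl⟩
    | cons h t => exact ⟨h, t ++ [a, x], rfl⟩
  -- last of Cy
  obtain ⟨bn, hbn⟩ : ∃ bn, (b :: U).getLast? = some bn :=
    ⟨(b :: U).getLast (by simp), List.getLast?_eq_getLast_of_ne_nil (by simp)⟩
  -- lengths
  have hA₀len : A₀.length + 2 = n - 2 := by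
    have h := congrArg List.length hx1; rw [hxlen] at h; simp at h; omega
  have hTlen : T.length + 3 = n - 1 := by simpa using hClen
  have hUlen : U.length + 2 = n - 2 := by simpa using hylen
  have hPlen : P.length + 3 = n - 1 := by
    have h := congrArg List.length hc2eq; simp at h; omega
  -- memberships
  have hxS : x ∈ S := hCS x (by simp)
  have hc2S : c2 ∈ S := hCS c2 (by simp)
  have hc3S : c3 ∈ S := hCS c3 (by simp)
  have hymem : y ∈ c3 :: T := by
    have h : (c3 :: T).getLast? = some y := by
      have h0 := hCy
      rw [show EndsAt (x :: c2 :: c3 :: T) y =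
        ((x :: c2 :: c3 :: T).getLast? = some y) from rfl,
        List.getLast?_cons_cons, List.getLast?_cons_cons] at h0
      exact h0
    exact mem_of_getLast?_eq h
  have hyS : y ∈ S := hCS y (List.mem_cons_of_mem _ (List.mem_cons_of_mem _ hymem))
  have haS : a ∈ S := hCxS a (by rw [hx1]; simp)
  have ha1S : a1 ∈ S := hCxS a1 (by rw [hx1, ha1]; simp)
  have heS : e ∈ S := hCS e (by rw [hc2eq]; simp)
  have hdS : d ∈ S := hCS d (by rw [hc2eq]; simp)
  have hbS : b ∈ S := hCyS b (by simp)
  have hbnmem : bn ∈ b :: U := mem_of_getLast?_eq hbn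
  have hbnS : bn ∈ S := hCyS bn (List.mem_cons_of_mem _ hbnmem)
  -- order facts
  have hax : a < x :=
    chain'_split_lt (l₁ := A₀ ++ [a]) (l₂ := [x])
      (by simpa [List.append_assoc] using hchx) (by simp) (by simp)
  have ha1x : a1 < x := by
    refine chain'_split_lt (l₁ := A₀ ++ [a]) (l₂ := [x])
      (by simpa [List.append_assoc] using hchx) ?_ (by simp)
    refine mem_left_of_head?_append (l₂ := [x]) ?_ (by simp)
    rw [show (A₀ ++ [a]) ++ [x] = A₀ ++ [a, x] by simp, ha1]; rfl
  have hxc2 : x < c2 :=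
    chain'_split_lt (l₁ := [x]) (l₂ := c2 :: c3 :: T) hCch (by simp) (by simp)
  have hc2c3 : c2 < c3 :=
    chain'_split_lt (l₁ := [x, c2]) (l₂ := c3 :: T) hCch (by simp) (by simp)
  have hc2y : c2 < y :=
    chain'_split_lt (l₁ := [x, c2]) (l₂ := c3 :: T) hCch (by simp) hymem
  have hxy : x < y := hxc2.trans hc2y
  have hac2 : a < c2 := hax.trans hxc2
  have hyb : y < b :=
    chain'_split_lt (l₁ := [y]) (l₂ := b :: U) hCych (by simp) (by simp)
  have hybn : y < bn :=
    chain'_split_lt (l₁ := [y]) (l₂ := b :: U) hCych (by simp) hbnmem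
  have hed : e < d :=
    chain'_split_lt (l₁ := P ++ [e]) (l₂ := [d, y])
      (by simpa [List.append_assoc] using hCch2) (by simp) (by simp)
  have hdy : d < y :=
    chain'_split_lt (l₁ := P ++ [e, d]) (l₂ := [y])
      (by simpa [List.append_assoc] using hCch2) (by simp) (by simp)
  have hxd : x < d := by
    refine chain'_split_lt (l₁ := P ++ [e]) (l₂ := [d, y])
      (by simpa [List.append_assoc] using hCch2) ?_ (by simp)
    refine mem_left_of_head?_append (l₂ := [d, y]) ?_ (by simp)
    rw [show (P ++ [e]) ++ [d, y] = P ++ [e, d, y] by simp, ← hc2eq]; rfl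
  have hdb : d < b := hdy.trans hyb
  -- contradiction helpers
  have capfree : ∀ p q r s : α, p ∈ S → q ∈ S → r ∈ S → s ∈ S →
      p < q → q < r → r < s → ¬ cup p q r → ¬ cup q r s → False := by
    intro p q r s hp hq hr hs h1 h2 h3 hn1 hn2
    have h := h4 [p, q, r, s]
      ⟨by simp, by simp [List.Chain', h1, h2, h3],
       by intro z hz; simp at hz; rcases hz with rfl | rfl | rfl | rfl <;> assumption,
       ⟨hn1, hn2, trivial⟩⟩
    simp at h
  have cupfree_n : ∀ L : List α, IsCupIn S cup L → L.length = n → False := by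
    intro L hL hLlen
    have := hncf L hL; omega
  -- key cap facts
  have hF1 : ¬ cup a x c2 := by
    intro hcup
    refine cupfree_n (A₀ ++ [a, x, c2, c3]) ⟨by simp, ?_, ?_, ?_⟩ (by simp; omega)
    · rw [show A₀ ++ [a, x, c2, c3] = (A₀ ++ [a, x]) ++ [c2, c3] by simp,
        List.Chain', List.isChain_append]
      refine ⟨hchx, by simp [hc2c3], ?_⟩
      intro u hu v hv
      rw [show A₀ ++ [a, x] = (A₀ ++ [a]) ++ [x] by simp, List.getLast?_concat] at hu
      simp at hu hv; subst hu; subst hv; exact hxc2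
    · intro z hz; simp at hz
      rcases hz with hz | rfl | rfl | rfl | rfl
      · exact hCxS z (by rw [hx1]; simp [hz])
      · exact haS
      · exact hxS
      · exact hc2S
      · exact hc3S
    · have t1 : Triples cup (A₀ ++ [a, x, c2]) := triples_snoc cup A₀ a x c2 hCxtr' hcup
      have t2 : Triples cup ((A₀ ++ [a]) ++ [x, c2, c3]) :=
        triples_snoc cup (A₀ ++ [a]) x c2 c3 (by simpa [List.append_assoc] using t1) hCtr.1
      simpa [List.append_assoc] using t2
  have hF3 : ∀ w, w ∈ S → c2 < w → cup x c2 w := by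
    intro w hw hcw
    by_contra hns
    exact capfree a x c2 w haS hxS hc2S hw hax hxc2 hcw hF1 hns
  have hF2 : ¬ cup d y b := by
    intro hcup
    refine cupfree_n ((P ++ [e]) ++ [d, y, b]) ⟨by simp, ?_, ?_, ?_⟩ (by simp; omega)
    · rw [show (P ++ [e]) ++ [d, y, b] = (P ++ [e, d, y]) ++ [b] by simp,
        List.Chain', List.isChain_append]
      refine ⟨hCch2, by simp, ?_⟩
      intro u hu v hv
      rw [show P ++ [e, d, y] = (P ++ [e, d]) ++ [y] by simp, List.getLast?_concat] at hu
      simp at hu hv; subst hu; subst hv; exact hyb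
    · intro z hz; simp at hz
      rcases hz with hz | hz | rfl | rfl | rfl
      · exact hCS z (by rw [hc2eq]; simp [hz])
      · exact hCS z (by rw [hc2eq]; simp [hz])
      · exact hdS
      · exact hyS
      · exact hbS
    · exact triples_snoc cup (P ++ [e]) d y b
        (by simpa [List.append_assoc] using hCtr2) hcup
  have hF4' : ∀ p, p ∈ S → p < d → cup p d y := by
    intro p hp hpd
    by_contra hns
    exact capfree p d y b hp hdS hyS hbS hpd hdy hyb hns hF2
  have hF5 : ¬ cup a x d := by
    intro hcup
    refine cupfree_n (A₀ ++ [a, x, d, y]) ⟨by simp, ?_, ?_, ?_⟩ (by simp; omega)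
    · rw [show A₀ ++ [a, x, d, y] = (A₀ ++ [a, x]) ++ [d, y] by simp,
        List.Chain', List.isChain_append]
      refine ⟨hchx, by simp [hdy], ?_⟩
      intro u hu v hv
      rw [show A₀ ++ [a, x] = (A₀ ++ [a]) ++ [x] by simp, List.getLast?_concat] at hu
      simp at hu hv; subst hu; subst hv; exact hxd
    · intro z hz; simp at hz
      rcases hz with hz | rfl | rfl | rfl | rfl
      · exact hCxS z (by rw [hx1]; simp [hz])
      · exact haS
      · exact hxS
      · exact hdS
      · exact hyS
    · have t1 : Triples cup (A₀ ++ [a, x, d]) := triples_snoc cup A₀ a x d hCxtr' hcup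
      have t2 : Triples cup ((A₀ ++ [a]) ++ [x, d, y]) :=
        triples_snoc cup (A₀ ++ [a]) x d y (by simpa [List.append_assoc] using t1)
          (hF4' x hxS hxd)
      simpa [List.append_assoc] using t2
  have hF4 : ∀ w, w ∈ S → d < w → cup x d w := by
    intro w hw hdw
    by_contra hns
    exact capfree a x d w haS hxS hdS hw hax hxd hdw hF5 hns
  have hF6 : ¬ cup c2 y b := by
    intro hcup
    refine cupfree_n (x :: c2 :: y :: b :: U) ⟨by simp, ?_, ?_, ?_⟩ (by simp; omega)
    · exact List.isChain_cons_cons.mpr ⟨hxc2, List.isChain_cons_cons.mpr ⟨hc2y, hCych⟩⟩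
    · intro z hz; simp at hz
      rcases hz with rfl | rfl | hz
      · exact hxS
      · exact hc2S
      · exact hCyS z (by simp [hz])
    · exact ⟨hF3 y hyS hc2y, hcup, hCytr⟩
  have hF7 : ∀ p, p ∈ S → p < c2 → cup p c2 y := by
    intro p hp hpc
    by_contra hns
    exact capfree p c2 y b hp hc2S hyS hbS hpc hc2y hyb hns hF6
  by_cases hxyb : cup x y b
  · -- CASE B
    have hC2cup : IsCupIn S cup (x :: y :: b :: U) := by
      refine ⟨by simp, List.isChain_cons_cons.mpr ⟨hxy, hCych⟩, ?_, ⟨hxyb, hCytr⟩⟩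
      intro z hz; simp at hz
      rcases hz with rfl | rfl | hz
      · exact hxS
      · exact hyS
      · exact hCyS z (by simp [hz])
    have hC2end : EndsAt (x :: y :: b :: U) bn := by
      show (x :: y :: b :: U).getLast? = some bn
      rw [List.getLast?_cons_cons, List.getLast?_cons_cons]; exact hbn
    have hC2laced : IsLacedCup S cup n (x :: y :: b :: U) :=
      ⟨hC2cup, by simp; omega, x, bn, Cx, [bn], rfl, hC2end, hx, isCupIn_single hbnS,
       hxend, rfl, by simp [hxlen]; omega⟩
    by_cases hB1 : cup a c2 c3
    · -- B1 : C₁ = a :: c2 :: c3 :: T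
      have hC1end : EndsAt (a :: c2 :: c3 :: T) y := by
        show (a :: c2 :: c3 :: T).getLast? = some y
        rw [List.getLast?_cons_cons, List.getLast?_cons_cons]
        have h0 := hCy
        rw [show EndsAt (x :: c2 :: c3 :: T) y =
          ((x :: c2 :: c3 :: T).getLast? = some y) from rfl,
          List.getLast?_cons_cons, List.getLast?_cons_cons] at h0
        exact h0
      have hC1cup : IsCupIn S cup (a :: c2 :: c3 :: T) := by
        refine ⟨by simp, List.isChain_cons_cons.mpr ⟨hac2, hCch.tail⟩, ?_, ⟨hB1, hCtr.2⟩⟩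
        intro z hz
        rcases List.mem_cons.mp hz with rfl | hz
        · exact haS
        · exact hCS z (List.mem_cons_of_mem _ hz)
      refine ⟨a :: c2 :: c3 :: T, x :: y :: b :: U,
        ⟨hC1cup, by simp; omega, a, y, [a], y :: b :: U, rfl, hC1end,
          isCupIn_single haS, hy, rfl, hystart, by simp [hylen]; omega⟩,
        hC2laced, ⟨a, y, x, bn, rfl, hC1end, rfl, hC2end, hax, hxy.le, hybn⟩⟩
    · -- B2 : C₁ = A₀ ++ [a, c2, y]
      have hF8 : ∀ p, p ∈ S → p < a → cup p a c2 := by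
        intro p hp hpa
        by_contra hns
        exact capfree p a c2 c3 hp haS hc2S hc3S hpa hac2 hc2c3 hns hB1
      have t1 : Triples cup (A₀ ++ [a, c2]) := by
        refine triples_graft cup A₀ a x c2 hCxtr' ?_
        intro l' p hl'
        refine hF8 p (hCxS p (by rw [hx1, hl']; simp)) ?_
        exact chain'_split_lt (l₁ := A₀) (l₂ := [a, x]) hchx (by rw [hl']; simp) (by simp)
      have t2 : Triples cup (A₀ ++ [a, c2, y]) :=
        triples_snoc cup A₀ a c2 y t1 (hF7 a haS hac2)
      have hjunc := List.isChain_append.mp hchx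
      have hC1ch : List.Chain' (· < ·) (A₀ ++ [a, c2, y]) := by
        rw [List.Chain', List.isChain_append]
        refine ⟨hjunc.1, by simp [hac2, hc2y], ?_⟩
        intro u hu v hv
        simp at hv; subst hv
        exact hjunc.2.2 u hu a (by simp)
      have hC1cup : IsCupIn S cup (A₀ ++ [a, c2, y]) := by
        refine ⟨by simp, hC1ch, ?_, t2⟩
        intro z hz; simp at hz
        rcases hz with hz | rfl | rfl | rfl
        · exact hCxS z (by rw [hx1]; simp [hz])
        · exact haS
        · exact hc2S
        · exact hyS
      have hC1start : StartsAt (A₀ ++ [a, c2, y]) a1 := by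
        show (A₀ ++ a :: [c2, y]).head? = some a1
        rw [head?_append_cons A₀ a [c2, y] [x], ha1]; rfl
      have hC1end : EndsAt (A₀ ++ [a, c2, y]) y := by
        show (A₀ ++ [a, c2, y]).getLast? = some y
        rw [show A₀ ++ [a, c2, y] = (A₀ ++ [a, c2]) ++ [y] by simp, List.getLast?_concat]
      refine ⟨A₀ ++ [a, c2, y], x :: y :: b :: U,
        ⟨hC1cup, by simp; omega, a1, y, [a1], y :: b :: U, hC1start, hC1end,
          isCupIn_single ha1S, hy, rfl, hystart, by simp [hylen]; omega⟩,
        hC2laced, ⟨a1, y, x, bn, hC1start, hC1end, rfl, hC2end, ha1x, hxy.le, hybn⟩⟩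
  · by_cases haxy : cup a x y
    · -- CASE A : C₁ = A₀ ++ [a, x, y]
      have t2 : Triples cup (A₀ ++ [a, x, y]) := triples_snoc cup A₀ a x y hCxtr' haxy
      have hC1ch : List.Chain' (· < ·) (A₀ ++ [a, x, y]) := by
        have h := List.isChain_append.mp hchx
        rw [List.Chain', List.isChain_append]
        refine ⟨h.1, by simp [hax, hxy], ?_⟩
        intro u hu v hv
        simp at hv; subst hv
        exact h.2.2 u hu a (by simp)
      have hC1cup : IsCupIn S cup (A₀ ++ [a, x, y]) := by
        refine ⟨by simp, hC1ch, ?_, t2⟩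
        intro z hz; simp at hz
        rcases hz with hz | rfl | rfl | rfl
        · exact hCxS z (by rw [hx1]; simp [hz])
        · exact haS
        · exact hxS
        · exact hyS
      have hC1start : StartsAt (A₀ ++ [a, x, y]) a1 := by
        show (A₀ ++ a :: [x, y]).head? = some a1
        rw [head?_append_cons A₀ a [x, y] [x], ha1]; rfl
      have hC1end : EndsAt (A₀ ++ [a, x, y]) y := by
        show (A₀ ++ [a, x, y]).getLast? = some y
        rw [show A₀ ++ [a, x, y] = (A₀ ++ [a, x]) ++ [y] by simp, List.getLast?_concat]
      have hC1laced : IsLacedCup S cup n (A₀ ++ [a, x, y]) :=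
        ⟨hC1cup, by simp; omega, a1, y, [a1], y :: b :: U, hC1start, hC1end,
          isCupIn_single ha1S, hy, rfl, hystart, by simp [hylen]; omega⟩
      by_cases hA1 : cup e d b
      · -- A1 : C₂ = P ++ [e, d, b]
        have tpre : Triples cup (P ++ [e, d]) :=
          triples_prefix cup (P ++ [e, d]) [y] (by simpa [List.append_assoc] using hCtr2)
        have tC2 : Triples cup (P ++ [e, d, b]) := triples_snoc cup P e d b tpre hA1
        have hjunc := List.isChain_append.mp
          (show List.Chain' (· < ·) ((P ++ [e, d]) ++ [y]) by
            simpa [List.append_assoc] using hCch2)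
        have hC2ch : List.Chain' (· < ·) (P ++ [e, d, b]) := by
          rw [show P ++ [e, d, b] = (P ++ [e, d]) ++ [b] by simp, List.Chain', List.isChain_append]
          refine ⟨hjunc.1, by simp, ?_⟩
          intro u hu v hv
          rw [show P ++ [e, d] = (P ++ [e]) ++ [d] by simp, List.getLast?_concat] at hu
          simp at hu hv; subst hu; subst hv; exact hdb
        have hC2cup : IsCupIn S cup (P ++ [e, d, b]) := by
          refine ⟨by simp, hC2ch, ?_, tC2⟩
          intro z hz; simp at hz
          rcases hz with hz | rfl | rfl | rfl
          · exact hCS z (by rw [hc2eq]; simp [hz])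
          · exact heS
          · exact hdS
          · exact hbS
        have hC2start : StartsAt (P ++ [e, d, b]) x := by
          show (P ++ e :: [d, b]).head? = some x
          rw [head?_append_cons P e [d, b] [d, y], ← hc2eq]; rfl
        have hC2end : EndsAt (P ++ [e, d, b]) b := by
          show (P ++ [e, d, b]).getLast? = some b
          rw [show P ++ [e, d, b] = (P ++ [e, d]) ++ [b] by simp, List.getLast?_concat]
        refine ⟨A₀ ++ [a, x, y], P ++ [e, d, b], hC1laced,
          ⟨hC2cup, by simp; omega, x, b, Cx, [b], hC2start, hC2end, hx,
            isCupIn_single hbS, hxend, rfl, by simp [hxlen]; omega⟩,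
          ⟨a1, y, x, b, hC1start, hC1end, hC2start, hC2end, ha1x, hxy.le, hyb⟩⟩
      · -- A2 : C₂ = x :: d :: b :: U
        have hF9 : ∀ w, w ∈ S → b < w → cup d b w := by
          intro w hw hbw
          by_contra hns
          exact capfree e d b w heS hdS hbS hw hed hdb hbw hA1 hns
        have tC2 : Triples cup (x :: d :: b :: U) := by
          refine ⟨hF4 b hbS hdb, ?_⟩
          cases U with
          | nil => trivial
          | cons w U' =>
            exact ⟨hF9 w (hCyS w (by simp)) (chain'_split_lt (l₁ := [y, b]) (l₂ := w :: U')
              hCych (by simp) (by simp)), hCytr.2⟩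
        have hC2ch : List.Chain' (· < ·) (x :: d :: b :: U) :=
          List.isChain_cons_cons.mpr ⟨hxd, List.isChain_cons_cons.mpr ⟨hdb, hCych.tail⟩⟩
        have hC2cup : IsCupIn S cup (x :: d :: b :: U) := by
          refine ⟨by simp, hC2ch, ?_, tC2⟩
          intro z hz; simp at hz
          rcases hz with rfl | rfl | hz
          · exact hxS
          · exact hdS
          · exact hCyS z (by simp [hz])
        have hC2end : EndsAt (x :: d :: b :: U) bn := by
          show (x :: d :: b :: U).getLast? = some bn
          rw [List.getLast?_cons_cons, List.getLast?_cons_cons]; exact hbn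
        refine ⟨A₀ ++ [a, x, y], x :: d :: b :: U, hC1laced,
          ⟨hC2cup, by simp; omega, x, bn, Cx, [bn], rfl, hC2end, hx,
            isCupIn_single hbnS, hxend, rfl, by simp [hxlen]; omega⟩,
          ⟨a1, y, x, bn, hC1start, hC1end, rfl, hC2end, ha1x, hxy.le, hybn⟩⟩
    · exact absurd (capfree a x y b haS hxS hyS hbS hax hxy hyb haxy hxyb) not_false
end
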